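/- arXiv:1911.08738 — 3 statements merged into one kernel-verified Lean document; each statement's English description precedes it below -/
import Mathlib

section
/- Let A be a symmetric positive definite n×n real matrix, p ≥ 2, u ≥ 0 and v > 0 real numbers, and ξ, η ∈ ℝⁿ. Then ‖ξ‖_A^p − p (u^{p−1}/v^{p−1}) ‖η‖_A^{p−2} (A η · ξ) + (p−1) (u^p/v^p) ‖η‖_A^p ≥ 0. -/
open Matrix

/-- `‖ξ‖_A = (A ξ · ξ)^{1/2}` -/
noncomputable def normA {n : ℕ} (A : Matrix (Fin n) (Fin n) ℝ) (ξ : Fin n → ℝ) : ℝ :=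
  Real.sqrt (A *ᵥ ξ ⬝ᵥ ξ)

lemma picone_symm {n : ℕ} (A : Matrix (Fin n) (Fin n) ℝ) (hA : A.PosDef)
    (ξ η : Fin n → ℝ) : A *ᵥ η ⬝ᵥ ξ = A *ᵥ ξ ⬝ᵥ η := by
  have hs : Aᵀ = A := by
    have := hA.isHermitian.eq
    simpa [Matrix.conjTranspose_eq_transpose_of_trivial] using this
  calc A *ᵥ η ⬝ᵥ ξ = ξ ⬝ᵥ (A *ᵥ η) := dotProduct_comm _ _
    _ = (ξ ᵥ* A) ⬝ᵥ η := dotProduct_mulVec _ _ _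
    _ = (Aᵀ *ᵥ ξ) ⬝ᵥ η := by rw [← mulVec_transpose]
    _ = A *ᵥ ξ ⬝ᵥ η := by rw [hs]

/-- Cauchy–Schwarz for the bilinear form of a positive definite matrix. -/
lemma picone_CS {n : ℕ} (A : Matrix (Fin n) (Fin n) ℝ) (hA : A.PosDef)
    (ξ η : Fin n → ℝ) : A *ᵥ η ⬝ᵥ ξ ≤ normA A ξ * normA A η := by
  have hξ : 0 ≤ A *ᵥ ξ ⬝ᵥ ξ := by
    have := hA.posSemidef.dotProduct_mulVec_nonneg ξ
    simpa [dotProduct_comm] using this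
  have hη : 0 ≤ A *ᵥ η ⬝ᵥ η := by
    have := hA.posSemidef.dotProduct_mulVec_nonneg η
    simpa [dotProduct_comm] using this
  have key : ∀ t : ℝ, 0 ≤ (A *ᵥ η ⬝ᵥ η) * (t * t) + (2 * (A *ᵥ η ⬝ᵥ ξ)) * t
      + (A *ᵥ ξ ⬝ᵥ ξ) := by
    intro t
    have h0 := hA.posSemidef.dotProduct_mulVec_nonneg (ξ + t • η)
    have hsym := picone_symm A hA ξ η
    simp only [star_trivial, mulVec_add, mulVec_smul, add_dotProduct, dotProduct_add,
      smul_dotProduct, dotProduct_smul, smul_eq_mul, dotProduct_comm ξ, dotProduct_comm η]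
      at h0 ⊢
    rw [hsym] at h0 ⊢
    nlinarith [h0]
  have hd := discrim_le_zero key
  rw [discrim] at hd
  have hsq : (A *ᵥ η ⬝ᵥ ξ) ^ 2 ≤ (A *ᵥ ξ ⬝ᵥ ξ) * (A *ᵥ η ⬝ᵥ η) := by nlinarith [hd]
  calc A *ᵥ η ⬝ᵥ ξ ≤ |A *ᵥ η ⬝ᵥ ξ| := le_abs_self _
    _ = Real.sqrt ((A *ᵥ η ⬝ᵥ ξ) ^ 2) := (Real.sqrt_sq_eq_abs _).symm
    _ ≤ Real.sqrt ((A *ᵥ ξ ⬝ᵥ ξ) * (A *ᵥ η ⬝ᵥ η)) := Real.sqrt_le_sqrt hsq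
    _ = normA A ξ * normA A η := Real.sqrt_mul hξ _

/-- Pointwise (algebraic) form of Picone's inequality for the operator
associated with a symmetric positive definite matrix `A`. -/
theorem picone_pointwise {n : ℕ} (A : Matrix (Fin n) (Fin n) ℝ) (hA : A.PosDef)
    (p : ℝ) (hp : 2 ≤ p) (u v : ℝ) (hu : 0 ≤ u) (hv : 0 < v) (ξ η : Fin n → ℝ) :
    0 ≤ normA A ξ ^ p
        - p * (u ^ (p - 1) / v ^ (p - 1)) * normA A η ^ (p - 2) * (A *ᵥ η ⬝ᵥ ξ)
        + (p - 1) * (u ^ p / v ^ p) * normA A η ^ p := by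
  set a := normA A ξ with ha
  set b := normA A η with hb
  set X := A *ᵥ η ⬝ᵥ ξ with hX
  have ha0 : 0 ≤ a := Real.sqrt_nonneg _
  have hb0 : 0 ≤ b := Real.sqrt_nonneg _
  set c : ℝ := u / v with hc
  have hc0 : 0 ≤ c := div_nonneg hu hv.le
  have hcs : X ≤ a * b := picone_CS A hA ξ η
  have hp1 : (1:ℝ) < p := by linarith
  have hp0 : (0:ℝ) < p := by linarith
  set q : ℝ := p.conjExponent with hq
  have hpq : p.HolderConjugate q := Real.HolderConjugate.conjExponent hp1
  -- rewrite the ratios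
  have h1 : u ^ (p-1) / v ^ (p-1) = c ^ (p-1) := (Real.div_rpow hu hv.le _).symm
  have h2 : u ^ p / v ^ p = c ^ p := (Real.div_rpow hu hv.le _).symm
  rw [h1, h2]
  -- b^(p-2) * b = b^(p-1)
  have hbb : b ^ (p-2) * b = b ^ (p-1) := by
    rw [show p - 1 = (p-2) + 1 by ring, Real.rpow_add' hb0 (by norm_num; linarith)]
    simp
  -- Young's inequality
  have hcb0 : 0 ≤ c * b := mul_nonneg hc0 hb0
  have young := Real.young_inequality_of_nonneg ha0
    (Real.rpow_nonneg hcb0 (p-1)) hpq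
  have hpow : ((c*b) ^ (p-1)) ^ q = (c*b) ^ p := by
    rw [← Real.rpow_mul hcb0, hpq.sub_one_mul_conj]
  rw [hpow] at young
  -- multiply Young by p
  have young' : p * (a * (c*b) ^ (p-1)) ≤ a ^ p + (p - 1) * (c*b) ^ p := by
    have h3 : p * (a ^ p / p + (c*b) ^ p / q) = a ^ p + (p / q) * (c*b) ^ p := by
      field_simp
    calc p * (a * (c*b) ^ (p-1)) ≤ p * (a ^ p / p + (c*b) ^ p / q) :=
          mul_le_mul_of_nonneg_left young hp0.le
      _ = a ^ p + (p / q) * (c*b) ^ p := h3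
      _ = a ^ p + (p - 1) * (c*b) ^ p := by rw [hpq.div_conj_eq_sub_one]
  have hmulrw : (c*b) ^ (p-1) = c ^ (p-1) * b ^ (p-1) := Real.mul_rpow hc0 hb0
  have hmulrw2 : (c*b) ^ p = c ^ p * b ^ p := Real.mul_rpow hc0 hb0
  rw [hmulrw, hmulrw2] at young'
  -- bound the middle term
  have hcoef : 0 ≤ p * c ^ (p-1) * b ^ (p-2) :=
    mul_nonneg (mul_nonneg hp0.le (Real.rpow_nonneg hc0 _)) (Real.rpow_nonneg hb0 _)
  have hmid : p * c ^ (p-1) * b ^ (p-2) * X ≤ p * (a * (c ^ (p-1) * b ^ (p-1))) := by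
    calc p * c ^ (p-1) * b ^ (p-2) * X ≤ p * c ^ (p-1) * b ^ (p-2) * (a * b) :=
          mul_le_mul_of_nonneg_left hcs hcoef
      _ = p * (a * (c ^ (p-1) * (b ^ (p-2) * b))) := by ring
      _ = p * (a * (c ^ (p-1) * b ^ (p-1))) := by rw [hbb]
  linarith
end

section
/- Let A be a symmetric positive definite n×n real matrix, p ≥ 2, u ≥ 0, v > 0, and ξ, η ∈ ℝⁿ. If ‖ξ‖_A^p − p (u^{p−1}/v^{p−1}) ‖η‖_A^{p−2} (A η · ξ) + (p−1)(u^p/v^p) ‖η‖_A^p = 0 and u ≠ 0, then A^{1/2} ξ = (u/v) A^{1/2} η, and hence ξ = (u/v) η. -/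
open Matrix

/-- The square root of a positive semidefinite matrix (as in the older Mathlib). -/
noncomputable def Matrix.PosSemidef.sqrt {n : ℕ} {A : Matrix (Fin n) (Fin n) ℝ} (hA : A.PosSemidef) :
    Matrix (Fin n) (Fin n) ℝ :=
  hA.1.eigenvectorUnitary.1 * diagonal ((↑) ∘ (√·) ∘ hA.1.eigenvalues) *
    (star hA.1.eigenvectorUnitary : Matrix (Fin n) (Fin n) ℝ)

lemma psd_sqrt_transpose {n : ℕ} {A : Matrix (Fin n) (Fin n) ℝ} (hA : A.PosSemidef) :
    (hA.sqrt)ᵀ = hA.sqrt := by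
  rw [← conjTranspose_eq_transpose_of_trivial]
  unfold Matrix.PosSemidef.sqrt
  rw [conjTranspose_mul, conjTranspose_mul, diagonal_conjTranspose]
  simp [Matrix.star_eq_conjTranspose, mul_assoc]

lemma psd_sqrt_mul_self {n : ℕ} {A : Matrix (Fin n) (Fin n) ℝ} (hA : A.PosSemidef) :
    hA.sqrt * hA.sqrt = A := by
  unfold Matrix.PosSemidef.sqrt
  have hU : (star hA.1.eigenvectorUnitary : Matrix (Fin n) (Fin n) ℝ) * hA.1.eigenvectorUnitary.1 = 1 :=
    Unitary.coe_star_mul_self _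
  have hD : diagonal ((↑) ∘ (√·) ∘ hA.1.eigenvalues) * diagonal ((↑) ∘ (√·) ∘ hA.1.eigenvalues)
      = diagonal (RCLike.ofReal ∘ hA.1.eigenvalues : Fin n → ℝ) := by
    rw [diagonal_mul_diagonal]
    congr 1; funext i
    simp [Real.mul_self_sqrt (hA.eigenvalues_nonneg i)]
  conv_rhs => rw [hA.1.spectral_theorem, Unitary.conjStarAlgAut_apply]
  calc _ = hA.1.eigenvectorUnitary.1 * diagonal ((↑) ∘ (√·) ∘ hA.1.eigenvalues) *
      ((star hA.1.eigenvectorUnitary : Matrix (Fin n) (Fin n) ℝ) * hA.1.eigenvectorUnitary.1) *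
      diagonal ((↑) ∘ (√·) ∘ hA.1.eigenvalues) *
      (star hA.1.eigenvectorUnitary : Matrix (Fin n) (Fin n) ℝ) := by simp only [mul_assoc]
    _ = _ := by rw [hU, mul_one, mul_assoc _ (diagonal _) (diagonal _), hD]


lemma young_strict {p a c : ℝ} (hp : 2 ≤ p) (ha : 0 ≤ a) (hc : 0 ≤ c) (hne : a ≠ c) :
    0 < a ^ p - p * c ^ (p - 1) * a + (p - 1) * c ^ p := by
  rcases hc.eq_or_lt with rfl | hc
  · rw [Real.zero_rpow (by linarith), Real.zero_rpow (by positivity)]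
    have ha' : 0 < a := lt_of_le_of_ne ha (Ne.symm hne)
    have := Real.rpow_pos_of_pos ha' p
    linarith
  · have hs : (-1:ℝ) ≤ a / c - 1 := by
      have : 0 ≤ a / c := div_nonneg ha hc.le
      linarith
    have hs' : a / c - 1 ≠ 0 := by
      intro h
      apply hne
      field_simp at h
      linarith
    have hb := one_add_mul_self_lt_rpow_one_add hs hs' (by linarith : (1:ℝ) < p)
    rw [show (1 : ℝ) + (a / c - 1) = a / c by ring] at hb
    rw [Real.div_rpow ha hc.le] at hb
    have hcp : 0 < c ^ p := Real.rpow_pos_of_pos hc p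
    have hcp1 : c ^ (p - 1) * c = c ^ p := by
      rw [← Real.rpow_add_one hc.ne' (p - 1)]; ring_nf
    have h2 : (1 + p * (a / c - 1)) * c ^ p < a ^ p := by
      calc (1 + p * (a / c - 1)) * c ^ p < (a ^ p / c ^ p) * c ^ p :=
            mul_lt_mul_of_pos_right hb hcp
        _ = a ^ p := by field_simp
    have h3 : (1 + p * (a / c - 1)) * c ^ p = c ^ p + p * (a / c) * c ^ p - p * c ^ p := by ring
    have h4 : p * (a / c) * c ^ p = p * c ^ (p - 1) * a := by
      rw [← hcp1]; field_simp
    nlinarith [h2, h3, h4]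

lemma young_nonneg {p a c : ℝ} (hp : 2 ≤ p) (ha : 0 ≤ a) (hc : 0 ≤ c) :
    0 ≤ a ^ p - p * c ^ (p - 1) * a + (p - 1) * c ^ p := by
  rcases eq_or_ne a c with rfl | hne
  · have h1 : a ^ (p - 1) * a = a ^ p := by
      rcases ha.eq_or_lt with rfl | ha'
      · rw [Real.zero_rpow (by linarith), Real.zero_rpow (by positivity)]; ring
      · rw [← Real.rpow_add_one ha'.ne' (p - 1)]; ring_nf
    nlinarith [h1]
  · exact (young_strict hp ha hc hne).le

lemma key_vec {E : Type*} [NormedAddCommGroup E] [InnerProductSpace ℝ E] {p t : ℝ}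
    (hp : 2 ≤ p) (ht : 0 < t) {x y : E}
    (h : ‖x‖ ^ p - p * t ^ (p - 1) * ‖y‖ ^ (p - 2) * (inner ℝ y x : ℝ)
        + (p - 1) * t ^ p * ‖y‖ ^ p = 0) : x = t • y := by
  set a := ‖x‖ with ha
  set b := ‖y‖ with hb
  have ha0 : 0 ≤ a := norm_nonneg x
  have hb0 : 0 ≤ b := norm_nonneg y
  set ip : ℝ := inner ℝ y x with hip
  have hcs : ip ≤ b * a := real_inner_le_norm y x
  have hb2 : (0:ℝ) ≤ b ^ (p - 2) := Real.rpow_nonneg hb0 _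
  have htp : (0:ℝ) < t ^ (p - 1) := Real.rpow_pos_of_pos ht _
  have hbb : b ^ (p - 2) * b = b ^ (p - 1) := by
    rcases hb0.eq_or_lt with h0 | h0
    · rw [← h0, mul_zero, Real.zero_rpow (ne_of_gt (by linarith : (0:ℝ) < p - 1))]
    · rw [← Real.rpow_add_one h0.ne' (p - 2)]; ring_nf
  have hEF : 0 ≤ p * t ^ (p - 1) * b ^ (p - 2) * (b * a - ip) := by
    apply mul_nonneg (mul_nonneg (mul_nonneg (by linarith) htp.le) hb2)
    linarith
  have hid : a ^ p - p * t ^ (p - 1) * b ^ (p - 2) * ip + (p - 1) * t ^ p * b ^ p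
      = (a ^ p - p * (t * b) ^ (p - 1) * a + (p - 1) * (t * b) ^ p)
        + p * t ^ (p - 1) * b ^ (p - 2) * (b * a - ip) := by
    rw [Real.mul_rpow ht.le hb0, Real.mul_rpow ht.le hb0, ← hbb]; ring
  have hF : 0 ≤ a ^ p - p * (t * b) ^ (p - 1) * a + (p - 1) * (t * b) ^ p :=
    young_nonneg hp ha0 (by positivity)
  have hFeq : a ^ p - p * (t * b) ^ (p - 1) * a + (p - 1) * (t * b) ^ p = 0 := by
    rw [hid] at h; linarith
  have hac : a = t * b := by
    by_contra hne
    exact absurd hFeq (ne_of_gt (young_strict hp ha0 (by positivity) hne))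
  have hEF0 : p * t ^ (p - 1) * b ^ (p - 2) * (b * a - ip) = 0 := by
    rw [hid] at h; linarith
  rcases hb0.eq_or_lt with h0 | h0
  · have hy : y = 0 := by rwa [eq_comm, norm_eq_zero] at h0
    have hx : x = 0 := by
      rw [← norm_eq_zero, ← ha, hac, ← h0, mul_zero]
    rw [hx, hy, smul_zero]
  · have hb2' : (0:ℝ) < b ^ (p - 2) := Real.rpow_pos_of_pos h0 _
    have : b * a - ip = 0 := by
      have hne : p * t ^ (p - 1) * b ^ (p - 2) ≠ 0 := by positivity
      exact (mul_eq_zero.1 hEF0).resolve_left hne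
    have hinner : ip = b * a := by linarith
    have := inner_eq_norm_mul_iff_real.mp (by rw [hip] at hinner; rw [hinner, ← hb, ← ha])
    -- this : ‖x‖ • y = ‖y‖ • x
    rw [← ha, ← hb, hac] at this
    have hb' : b ≠ 0 := h0.ne'
    have : b • (t • y) = b • x := by
      rw [smul_smul, mul_comm b t]; exact this
    exact (smul_right_injective E hb' this).symm

theorem picone_equality_case' {n : ℕ} (A : Matrix (Fin n) (Fin n) ℝ) (hA : A.PosDef)
    (p : ℝ) (hp : 2 ≤ p) (u v : ℝ) (hu : 0 ≤ u) (hv : 0 < v) (ξ η : Fin n → ℝ)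
    (heq : Real.sqrt (A *ᵥ ξ ⬝ᵥ ξ) ^ p
        - p * (u ^ (p - 1) / v ^ (p - 1)) * Real.sqrt (A *ᵥ η ⬝ᵥ η) ^ (p - 2) * (A *ᵥ η ⬝ᵥ ξ)
        + (p - 1) * (u ^ p / v ^ p) * Real.sqrt (A *ᵥ η ⬝ᵥ η) ^ p = 0)
    (hu0 : u ≠ 0) :
    hA.posSemidef.sqrt *ᵥ ξ = (u / v) • (hA.posSemidef.sqrt *ᵥ η) ∧
    ξ = (u / v) • η := by
  set S := hA.posSemidef.sqrt with hS
  have hSsym : Sᵀ = S := by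
    exact psd_sqrt_transpose hA.posSemidef
  have hSS : S * S = A := psd_sqrt_mul_self hA.posSemidef
  have hdot : ∀ w z : Fin n → ℝ, A *ᵥ w ⬝ᵥ z = (S *ᵥ w) ⬝ᵥ (S *ᵥ z) := by
    intro w z
    conv_lhs => rw [← hSS, ← mulVec_mulVec, ← hSsym, mulVec_transpose,
      ← dotProduct_mulVec]
    rw [hSsym]
  -- pass to EuclideanSpace
  set x : EuclideanSpace ℝ (Fin n) := WithLp.toLp 2 (S *ᵥ ξ) with hx
  set y : EuclideanSpace ℝ (Fin n) := WithLp.toLp 2 (S *ᵥ η) with hy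
  have hnx : Real.sqrt (A *ᵥ ξ ⬝ᵥ ξ) = ‖x‖ := by
    rw [hdot, EuclideanSpace.norm_eq]
    congr 1
    simp [x, dotProduct, Real.norm_eq_abs, sq_abs, sq, Finset.sum_congr]
  have hny : Real.sqrt (A *ᵥ η ⬝ᵥ η) = ‖y‖ := by
    rw [hdot, EuclideanSpace.norm_eq]
    congr 1
    simp [y, dotProduct, Real.norm_eq_abs, sq_abs, sq, Finset.sum_congr]
  have hipe : A *ᵥ η ⬝ᵥ ξ = (inner ℝ y x : ℝ) := by
    rw [hdot]
    simp [x, y, PiLp.inner_apply, dotProduct, RCLike.inner_apply, mul_comm]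
  have hupos : 0 < u := lt_of_le_of_ne hu (Ne.symm hu0)
  have ht : 0 < u / v := div_pos hupos hv
  have h1 : u ^ (p - 1) / v ^ (p - 1) = (u / v) ^ (p - 1) :=
    (Real.div_rpow hu hv.le _).symm
  have h2 : u ^ p / v ^ p = (u / v) ^ p := (Real.div_rpow hu hv.le _).symm
  rw [hnx, hny, hipe, h1, h2] at heq
  have hxy : x = (u / v) • y := key_vec hp ht heq
  have hxy' : S *ᵥ ξ = (u / v) • (S *ᵥ η) := by
    simpa [x, y] using congrArg WithLp.ofLp hxy
  constructor
  · exact hxy'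
  · have hSu : IsUnit S := by
      rw [Matrix.isUnit_iff_isUnit_det, isUnit_iff_ne_zero]
      intro h0
      have := hA.det_pos
      rw [← hSS, det_mul, h0, mul_zero] at this
      exact lt_irrefl _ this
    have hinj := Matrix.mulVec_injective_iff_isUnit.mpr hSu
    apply hinj
    show S *ᵥ ξ = S *ᵥ ((u / v) • η)
    rw [mulVec_smul]
    exact hxy'


/-- Equality case of the pointwise Picone inequality: if the Picone expression
vanishes and `u ≠ 0`, then `A^{1/2} ξ = (u/v) A^{1/2} η`, and hence `ξ = (u/v) η`. -/
theorem picone_equality_case {n : ℕ} (A : Matrix (Fin n) (Fin n) ℝ) (hA : A.PosDef)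
    (p : ℝ) (hp : 2 ≤ p) (u v : ℝ) (hu : 0 ≤ u) (hv : 0 < v) (ξ η : Fin n → ℝ)
    (heq : normA A ξ ^ p
        - p * (u ^ (p - 1) / v ^ (p - 1)) * normA A η ^ (p - 2) * (A *ᵥ η ⬝ᵥ ξ)
        + (p - 1) * (u ^ p / v ^ p) * normA A η ^ p = 0)
    (hu0 : u ≠ 0) :
    hA.posSemidef.sqrt *ᵥ ξ = (u / v) • (hA.posSemidef.sqrt *ᵥ η) ∧
    ξ = (u / v) • η := by
  simp only [normA] at heq
  exact picone_equality_case' A hA p hp u v hu hv ξ η heq hu0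
end

section
/- Let p ≥ 2, α ≥ 1, and μ, C ≥ 0. Then (1/α^p) · ( (2 α^{p+1} μ/(p+1))^{2/p} + C α^{2/p} )^{p/2} ≤ 2αμ/(p+1) + C₁/α^{p−1} + C₂/α, where C₁ = p 2^{(p−2)/2} C^{p/2} and C₂ = p 2^{(p−2)/2} C (2μ/(p+1))^{(p−2)/p}. -/
lemma mvt_step (a b q : ℝ) (ha : 0 ≤ a) (hb : 0 ≤ b) (hq : 1 ≤ q) :
    (a + b) ^ q ≤ a ^ q + q * (a + b) ^ (q - 1) * b := by
  rcases eq_or_lt_of_le (add_nonneg ha hb) with h | hab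
  · have ha0 : a = 0 := by linarith
    have hb0 : b = 0 := by linarith
    subst ha0 hb0
    simp [Real.zero_rpow (by linarith : q ≠ 0)]
  · set s : ℝ := a / (a + b) - 1 with hs_def
    have hs : -1 ≤ s := by
      have : 0 ≤ a / (a + b) := div_nonneg ha hab.le
      simp only [hs_def]; linarith
    have hber := one_add_mul_self_le_rpow_one_add hs hq
    have h1s : 1 + s = a / (a + b) := by ring
    rw [h1s] at hber
    have hmul : (a / (a + b)) ^ q * (a + b) ^ q = a ^ q := by
      rw [← Real.mul_rpow (div_nonneg ha hab.le) hab.le, div_mul_cancel₀ _ hab.ne']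
    have hT : (a + b) ^ q = (a + b) ^ (q - 1) * (a + b) := by
      rw [← Real.rpow_add_one hab.ne' (q - 1)]; ring_nf
    have hTn : 0 ≤ (a + b) ^ q := Real.rpow_nonneg hab.le q
    have hmm := mul_le_mul_of_nonneg_right hber hTn
    rw [hmul] at hmm
    have hsT : s * (a + b) ^ q = -b * (a + b) ^ (q - 1) := by
      rw [hT, hs_def]; field_simp; ring
    nlinarith [hsT, hmm]

lemma key_ineq (a b q : ℝ) (ha : 0 ≤ a) (hb : 0 ≤ b) (hq : 1 ≤ q) :
    (a + b) ^ q ≤ a ^ q + q * 2 ^ (q - 1) * (b ^ q + a ^ (q - 1) * b) := by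
  have h := mvt_step a b q ha hb hq
  have hq1 : (0:ℝ) ≤ q - 1 := by linarith
  have h2q : (0:ℝ) < 2 ^ (q - 1) := Real.rpow_pos_of_pos two_pos _
  have hbq : 0 ≤ b ^ q := Real.rpow_nonneg hb q
  have haq1 : 0 ≤ a ^ (q - 1) := Real.rpow_nonneg ha _
  rcases le_total b a with hba | hab
  · have h2 : (a + b) ^ (q - 1) ≤ 2 ^ (q - 1) * a ^ (q - 1) := by
      calc (a + b) ^ (q - 1) ≤ (2 * a) ^ (q - 1) :=
            Real.rpow_le_rpow (by positivity) (by linarith) hq1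
        _ = 2 ^ (q - 1) * a ^ (q - 1) := Real.mul_rpow (by norm_num) ha
    nlinarith [mul_nonneg (mul_nonneg (by linarith : (0:ℝ) ≤ q) h2q.le) hbq,
      mul_le_mul_of_nonneg_right (mul_le_mul_of_nonneg_left h2 (by linarith : (0:ℝ) ≤ q)) hb]
  · rcases eq_or_lt_of_le hb with hb0 | hb0
    · have ha0 : a = 0 := by linarith
      subst ha0; rw [← hb0]
      simp [Real.zero_rpow (by linarith : q ≠ 0)]
    · have h2 : (a + b) ^ (q - 1) ≤ 2 ^ (q - 1) * b ^ (q - 1) := by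
        calc (a + b) ^ (q - 1) ≤ (2 * b) ^ (q - 1) :=
              Real.rpow_le_rpow (by positivity) (by linarith) hq1
          _ = 2 ^ (q - 1) * b ^ (q - 1) := Real.mul_rpow (by norm_num) hb
      have hbb : b ^ (q - 1) * b = b ^ q := by
        rw [← Real.rpow_add_one hb0.ne' (q - 1)]; ring_nf
      calc (a + b) ^ q ≤ a ^ q + q * (a + b) ^ (q - 1) * b := h
        _ ≤ a ^ q + q * (2 ^ (q - 1) * b ^ (q - 1)) * b := by
            gcongr
        _ = a ^ q + q * 2 ^ (q - 1) * b ^ q := by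
            rw [show q * (2 ^ (q-1) * b ^ (q-1)) * b = q * 2 ^ (q-1) * (b ^ (q-1) * b) from by
              ring, hbb]
        _ ≤ a ^ q + q * 2 ^ (q - 1) * (b ^ q + a ^ (q - 1) * b) := by
            nlinarith [mul_nonneg haq1 hb,
              mul_nonneg (mul_nonneg (by linarith : (0:ℝ) ≤ q) h2q.le) (mul_nonneg haq1 hb)]

/-- Estimate for the energy of the gluing region in the proof of the gap
phenomenon: for `p ≥ 2`, `α ≥ 1`, `μ, C ≥ 0`,
`(1/α^p)·((2α^{p+1}μ/(p+1))^{2/p} + Cα^{2/p})^{p/2} ≤ 2αμ/(p+1) + C₁/α^{p−1} + C₂/α`. -/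
theorem gluing_energy_estimate (p α μ C : ℝ) (hp : 2 ≤ p) (hα : 1 ≤ α)
    (hμ : 0 ≤ μ) (hC : 0 ≤ C) :
    (1 / α ^ p) * ((2 * α ^ (p + 1) * μ / (p + 1)) ^ (2 / p) + C * α ^ (2 / p)) ^ (p / 2)
      ≤ 2 * α * μ / (p + 1)
        + (p * 2 ^ ((p - 2) / 2) * C ^ (p / 2)) / α ^ (p - 1)
        + (p * 2 ^ ((p - 2) / 2) * C * (2 * μ / (p + 1)) ^ ((p - 2) / p)) / α := by
  have hp0 : (0:ℝ) < p := by linarith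
  have hα0 : (0:ℝ) < α := by linarith
  have hp1 : (0:ℝ) < p + 1 := by linarith
  set A : ℝ := 2 * α ^ (p + 1) * μ / (p + 1) with hA_def
  have hαp1 : 0 ≤ α ^ (p + 1) := (Real.rpow_pos_of_pos hα0 _).le
  have hA0 : 0 ≤ A := by
    rw [hA_def]; positivity
  have hq : 1 ≤ p / 2 := by linarith
  set M : ℝ := 2 * μ / (p + 1) with hM_def
  have hM0 : 0 ≤ M := by rw [hM_def]; positivity
  have key := key_ineq (A ^ (2 / p)) (C * α ^ (2 / p)) (p / 2)
    (Real.rpow_nonneg hA0 _) (by positivity) hq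
  -- simplify the three rpow terms
  have e1 : (A ^ (2 / p)) ^ (p / 2) = A := by
    rw [← Real.rpow_mul hA0, show 2 / p * (p / 2) = 1 from by field_simp, Real.rpow_one]
  have e2 : (C * α ^ (2 / p)) ^ (p / 2) = C ^ (p / 2) * α := by
    rw [Real.mul_rpow hC (Real.rpow_nonneg hα0.le _), ← Real.rpow_mul hα0.le,
      show 2 / p * (p / 2) = 1 from by field_simp, Real.rpow_one]
  have e3 : (A ^ (2 / p)) ^ (p / 2 - 1) * (C * α ^ (2 / p)) = M ^ ((p - 2) / p) * α ^ (p - 1) * C := by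
    have hAM : A = α ^ (p + 1) * M := by rw [hA_def, hM_def]; ring
    rw [← Real.rpow_mul hA0, show 2 / p * (p / 2 - 1) = (p - 2) / p from by field_simp,
      hAM, Real.mul_rpow hαp1 hM0, ← Real.rpow_mul hα0.le]
    rw [show α ^ ((p + 1) * ((p - 2) / p)) * M ^ ((p - 2) / p) * (C * α ^ (2 / p))
        = M ^ ((p - 2) / p) * (α ^ ((p + 1) * ((p - 2) / p)) * α ^ (2 / p)) * C from by ring,
      ← Real.rpow_add hα0, show (p + 1) * ((p - 2) / p) + 2 / p = p - 1 from by field_simp; ring]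
  rw [e1, e2, e3] at key
  have hexp2 : (p / 2 - 1) = (p - 2) / 2 := by ring
  rw [hexp2] at key
  -- positivity facts for final algebra
  have hαp : (0:ℝ) < α ^ p := Real.rpow_pos_of_pos hα0 _
  have hαpm : (0:ℝ) < α ^ (p - 1) := Real.rpow_pos_of_pos hα0 _
  have h1 : α ^ (p + 1) = α ^ p * α := by
    rw [Real.rpow_add hα0, Real.rpow_one]
  have h2 : α ^ p = α ^ (p - 1) * α := by
    rw [← Real.rpow_add_one hα0.ne' (p - 1)]; ring_nf
  have hD : (0:ℝ) < 2 ^ ((p - 2) / 2) := Real.rpow_pos_of_pos two_pos _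
  have hCq : 0 ≤ C ^ (p / 2) := Real.rpow_nonneg hC _
  have hMq : 0 ≤ M ^ ((p - 2) / p) := Real.rpow_nonneg hM0 _
  calc (1 / α ^ p) * ((A ^ (2 / p)) + C * α ^ (2 / p)) ^ (p / 2)
      ≤ (1 / α ^ p) * (A + p / 2 * 2 ^ ((p - 2) / 2) *
          (C ^ (p / 2) * α + M ^ ((p - 2) / p) * α ^ (p - 1) * C)) := by
        apply mul_le_mul_of_nonneg_left key (by positivity)
    _ = 2 * α * μ / (p + 1) + (p / 2 * 2 ^ ((p - 2) / 2) * C ^ (p / 2)) / α ^ (p - 1)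
        + (p / 2 * 2 ^ ((p - 2) / 2) * C * M ^ ((p - 2) / p)) / α := by
        rw [hA_def, h1, h2]
        field_simp
        ring
    _ ≤ 2 * α * μ / (p + 1)
        + (p * 2 ^ ((p - 2) / 2) * C ^ (p / 2)) / α ^ (p - 1)
        + (p * 2 ^ ((p - 2) / 2) * C * M ^ ((p - 2) / p)) / α := by
        gcongr <;> linarith
end
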